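/- Let λ and μ be partitions of the same integer N with λ ⊵ μ in the dominance order, and let κ be any partition. Then λ ∪ κ ⊵ μ ∪ κ, and consequently n(λ ∪ κ) ≤ n(μ ∪ κ), where λ ∪ κ denotes the partition whose multiset of parts is the union of the multisets of parts of λ and κ, and n(λ) = Σ_i (i − 1)λ_i. -/

import Mathlib

open scoped Classical

/-- `lam` is a partition of `n`: a weakly decreasing, eventually-zero function
`ℕ → ℕ` recording the parts (0-indexed), whose sum of parts is `n`. -/
def IsPartitionOf (lam : ℕ → ℕ) (n : ℕ) : Prop :=
  Antitone lam ∧ ∃ N, (∀ i, N ≤ i → lam i = 0) ∧ ∑ i ∈ Finset.range N, lam i = n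

/-- `lam` is a partition (of unspecified weight). -/
def IsPartitionFun (lam : ℕ → ℕ) : Prop :=
  Antitone lam ∧ ∃ N, ∀ i, N ≤ i → lam i = 0

/-- The multiplicity of the value `v` as a part of `lam`. -/
noncomputable def partCount (lam : ℕ → ℕ) (v : ℕ) : ℕ :=
  Set.ncard {i : ℕ | lam i = v}

/-- `nu` is the union `lam ∪ kap`: its multiset of parts is the union of the
multisets of parts of `lam` and `kap`. -/
def IsUnionOf (nu lam kap : ℕ → ℕ) : Prop :=
  ∀ v : ℕ, 1 ≤ v → partCount nu v = partCount lam v + partCount kap v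

/-- `n(λ) = Σ_i (i-1) λ_i` (1-indexed). -/
noncomputable def nVal (lam : ℕ → ℕ) : ℕ :=
  ∑ᶠ i : ℕ, i * lam i

noncomputable def mF (f : ℕ → ℕ) (B v : ℕ) : ℕ :=
  ((Finset.range B).filter (fun i => v ≤ f i)).card

lemma mF_iff (f : ℕ → ℕ) (B v : ℕ) (hf : Antitone f) (hB : ∀ i, B ≤ i → f i = 0)
    (hv : 1 ≤ v) (i : ℕ) : v ≤ f i ↔ i < mF f B v := by
  have hmem : ∀ j, v ≤ f j → j ∈ (Finset.range B).filter (fun i => v ≤ f i) := by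
    intro j hj
    simp only [Finset.mem_filter, Finset.mem_range]
    refine ⟨?_, hj⟩
    by_contra h
    have := hB j (by omega)
    omega
  constructor
  · intro h
    have hsub : Finset.range (i + 1) ⊆ (Finset.range B).filter (fun i => v ≤ f i) := by
      intro j hj
      simp only [Finset.mem_range] at hj
      exact hmem j (le_trans h (hf (by omega)))
    have := Finset.card_le_card hsub
    simp only [Finset.card_range] at this
    simpa [mF] using this
  · intro h
    by_contra hc
    push_neg at hc
    have hsub : (Finset.range B).filter (fun i => v ≤ f i) ⊆ Finset.range i := by
      intro j hj
      simp only [Finset.mem_filter, Finset.mem_range] at hj ⊢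
      by_contra hji
      push_neg at hji
      have := hf hji
      omega
    have := Finset.card_le_card hsub
    simp only [Finset.card_range] at this
    simp only [mF] at h
    omega

lemma sum_eq_sum_min (f : ℕ → ℕ) (B V : ℕ) (hf : Antitone f) (hB : ∀ i, B ≤ i → f i = 0)
    (hV : ∀ i, f i ≤ V) (k : ℕ) :
    ∑ i ∈ Finset.range k, f i = ∑ v ∈ Finset.Icc 1 V, min k (mF f B v) := by
  have h1 : ∀ i, f i = ∑ v ∈ Finset.Icc 1 V, (if v ≤ f i then 1 else 0) := by
    intro i
    rw [← Finset.card_filter]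
    have : (Finset.Icc 1 V).filter (fun v => v ≤ f i) = Finset.Icc 1 (f i) := by
      ext v
      simp only [Finset.mem_filter, Finset.mem_Icc]
      constructor
      · rintro ⟨⟨h1, h2⟩, h3⟩; exact ⟨h1, h3⟩
      · rintro ⟨h1, h2⟩; exact ⟨⟨h1, le_trans h2 (hV i)⟩, h2⟩
    rw [this]
    simp [Nat.card_Icc]
  calc ∑ i ∈ Finset.range k, f i
      = ∑ i ∈ Finset.range k, ∑ v ∈ Finset.Icc 1 V, (if v ≤ f i then 1 else 0) := by
        exact Finset.sum_congr rfl fun i _ => h1 i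
    _ = ∑ v ∈ Finset.Icc 1 V, ∑ i ∈ Finset.range k, (if v ≤ f i then 1 else 0) :=
        Finset.sum_comm
    _ = ∑ v ∈ Finset.Icc 1 V, min k (mF f B v) := by
        refine Finset.sum_congr rfl fun v hv => ?_
        simp only [Finset.mem_Icc] at hv
        rw [← Finset.card_filter]
        have : (Finset.range k).filter (fun i => v ≤ f i) = Finset.range (min k (mF f B v)) := by
          ext i
          simp only [Finset.mem_filter, Finset.mem_range, lt_min_iff]
          have := mF_iff f B v hf hB hv.1 i
          tauto
        rw [this]
        simp

lemma partCount_eq (f : ℕ → ℕ) (B v : ℕ) (hB : ∀ i, B ≤ i → f i = 0) (hv : 1 ≤ v) :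
    partCount f v = ((Finset.range B).filter (fun i => f i = v)).card := by
  have : {i : ℕ | f i = v} = ↑((Finset.range B).filter (fun i => f i = v)) := by
    ext i
    simp only [Set.mem_setOf_eq, Finset.coe_filter, Finset.mem_range, Set.mem_setOf_eq]
    constructor
    · intro h
      refine ⟨?_, h⟩
      by_contra hc
      have := hB i (by omega)
      omega
    · exact fun h => h.2
  rw [partCount, this, Set.ncard_coe_finset]

lemma mF_eq_sum_pc (f : ℕ → ℕ) (B V v : ℕ) (hB : ∀ i, B ≤ i → f i = 0) (hV : ∀ i, f i ≤ V)
    (hv : 1 ≤ v) : mF f B v = ∑ w ∈ Finset.Icc v V, partCount f w := by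
  rw [mF]
  rw [Finset.card_eq_sum_card_fiberwise (f := f) (t := Finset.Icc v V)
    (by intro i hi; simp only [Finset.mem_coe, Finset.mem_filter] at hi; simp only [Finset.mem_coe, Finset.mem_Icc];
        exact ⟨hi.2, hV i⟩)]
  refine Finset.sum_congr rfl fun w hw => ?_
  simp only [Finset.mem_Icc] at hw
  rw [partCount_eq f B w hB (le_trans hv hw.1)]
  congr 1
  rw [Finset.filter_filter]
  refine Finset.filter_congr fun i _ => ?_
  constructor
  · exact fun h => h.2
  · exact fun h => ⟨by omega, h⟩

lemma mF_anti (f : ℕ → ℕ) (B : ℕ) : Antitone (mF f B) := by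
  intro v v' h
  apply Finset.card_le_card
  intro i hi
  simp only [Finset.mem_filter] at hi ⊢
  exact ⟨hi.1, le_trans h hi.2⟩

lemma mF_le (f : ℕ → ℕ) (B v : ℕ) : mF f B v ≤ B := by
  calc mF f B v ≤ (Finset.range B).card := Finset.card_filter_le _ _
    _ = B := Finset.card_range B

lemma mF_top (f : ℕ → ℕ) (B V : ℕ) (hV : ∀ i, f i ≤ V) : mF f B (V + 1) = 0 := by
  rw [mF, Finset.card_eq_zero, Finset.filter_eq_empty_iff]
  intro i _
  have := hV i
  omega

lemma split_exists (X Y : ℕ → ℕ) (V k : ℕ) (hX : Antitone X) (hY : Antitone Y)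
    (hX0 : X (V + 1) = 0) (hY0 : Y (V + 1) = 0) :
    ∃ a b, a + b = k ∧ ∀ v ∈ Finset.Icc 1 V, min k (X v + Y v) ≤ min a (X v) + min b (Y v) := by
  have hex : ∃ v, X (v + 1) + Y (v + 1) ≤ k := ⟨V, by omega⟩
  set w := Nat.find hex + 1 with hw
  have hwk : X w + Y w ≤ k := Nat.find_spec hex
  have hmin : ∀ u, 1 ≤ u → u < w → k < X u + Y u := by
    intro u h1 h2
    obtain ⟨u', rfl⟩ : ∃ u', u = u' + 1 := ⟨u - 1, by omega⟩
    have := Nat.find_min hex (m := u') (by omega)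
    omega
  set a := max (X w) (k - Y (w - 1)) with ha
  have hak : a ≤ k := by
    have : X w ≤ k := by omega
    omega
  refine ⟨a, k - a, by omega, ?_⟩
  intro v hv
  simp only [Finset.mem_Icc] at hv
  rcases le_or_gt w v with hvw | hvw
  · have h1 : X v ≤ X w := hX hvw
    have h2 : Y v ≤ Y w := hY hvw
    have h3 : Y w ≤ Y (w - 1) := hY (by omega)
    omega
  · have h1 : X (w - 1) ≤ X v := hX (by omega)
    have h2 : Y (w - 1) ≤ Y v := hY (by omega)
    have h3 : k < X (w - 1) + Y (w - 1) := hmin (w - 1) (by omega) (by omega)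
    have h4 : X w ≤ X (w - 1) := hX (by omega)
    omega

lemma abel_sum (f : ℕ → ℕ) (K : ℕ) :
    ∑ i ∈ Finset.range K, i * f i + ∑ k ∈ Finset.range K, ∑ i ∈ Finset.range (k + 1), f i
      = K * ∑ i ∈ Finset.range K, f i := by
  induction K with
  | zero => simp
  | succ K ih =>
    rw [Finset.sum_range_succ (f := fun i => i * f i),
        Finset.sum_range_succ (f := fun k => ∑ i ∈ Finset.range (k + 1), f i),
        Finset.sum_range_succ (f := f)]
    have : ∑ i ∈ Finset.range K, i * f i + K * f K +
        (∑ k ∈ Finset.range K, ∑ i ∈ Finset.range (k + 1), f i +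
          (∑ i ∈ Finset.range K, f i + f K))
        = (∑ i ∈ Finset.range K, i * f i +
            ∑ k ∈ Finset.range K, ∑ i ∈ Finset.range (k + 1), f i) +
          (K * f K + ∑ i ∈ Finset.range K, f i + f K) := by ring
    rw [this, ih]
    ring

/-- if `lam ⊵ mu` are partitions of the same integer `N` and
`kap` is any partition, then `lam ∪ kap ⊵ mu ∪ kap` and consequently
`n(lam ∪ kap) ≤ n(mu ∪ kap)`. -/
theorem stmt9 (N : ℕ) (lam mu kap nul num : ℕ → ℕ)
    (hlam : IsPartitionOf lam N) (hmu : IsPartitionOf mu N)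
    (hkap : IsPartitionFun kap)
    (hnul : IsPartitionFun nul) (hnum : IsPartitionFun num)
    (hul : IsUnionOf nul lam kap) (hum : IsUnionOf num mu kap)
    (hdom : ∀ k, ∑ i ∈ Finset.range k, mu i ≤ ∑ i ∈ Finset.range k, lam i) :
    (∀ k, ∑ i ∈ Finset.range k, num i ≤ ∑ i ∈ Finset.range k, nul i) ∧
    nVal nul ≤ nVal num := by
  obtain ⟨hlA, N1, hN1, hsum1⟩ := hlam
  obtain ⟨hmA, N2, hN2, hsum2⟩ := hmu
  obtain ⟨hkA, N3, hN3⟩ := hkap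
  obtain ⟨hnlA, N4, hN4⟩ := hnul
  obtain ⟨hnmA, N5, hN5⟩ := hnum
  set B := N1 + N2 + N3 + N4 + N5 with hBdef
  have hBl : ∀ i, B ≤ i → lam i = 0 := fun i hi => hN1 i (by omega)
  have hBm : ∀ i, B ≤ i → mu i = 0 := fun i hi => hN2 i (by omega)
  have hBk : ∀ i, B ≤ i → kap i = 0 := fun i hi => hN3 i (by omega)
  have hBnl : ∀ i, B ≤ i → nul i = 0 := fun i hi => hN4 i (by omega)
  have hBnm : ∀ i, B ≤ i → num i = 0 := fun i hi => hN5 i (by omega)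
  set V := lam 0 + mu 0 + kap 0 + nul 0 + num 0 with hVdef
  have hVl : ∀ i, lam i ≤ V := fun i => le_trans (hlA (Nat.zero_le i)) (by omega)
  have hVm : ∀ i, mu i ≤ V := fun i => le_trans (hmA (Nat.zero_le i)) (by omega)
  have hVk : ∀ i, kap i ≤ V := fun i => le_trans (hkA (Nat.zero_le i)) (by omega)
  have hVnl : ∀ i, nul i ≤ V := fun i => le_trans (hnlA (Nat.zero_le i)) (by omega)
  have hVnm : ∀ i, num i ≤ V := fun i => le_trans (hnmA (Nat.zero_le i)) (by omega)
  have Sl := sum_eq_sum_min lam B V hlA hBl hVl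
  have Sm := sum_eq_sum_min mu B V hmA hBm hVm
  have Sk := sum_eq_sum_min kap B V hkA hBk hVk
  have Snl := sum_eq_sum_min nul B V hnlA hBnl hVnl
  have Snm := sum_eq_sum_min num B V hnmA hBnm hVnm
  have haddl : ∀ v, 1 ≤ v → mF nul B v = mF lam B v + mF kap B v := by
    intro v hv
    rw [mF_eq_sum_pc nul B V v hBnl hVnl hv, mF_eq_sum_pc lam B V v hBl hVl hv,
        mF_eq_sum_pc kap B V v hBk hVk hv, ← Finset.sum_add_distrib]
    refine Finset.sum_congr rfl fun w hw => ?_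
    simp only [Finset.mem_Icc] at hw
    exact hul w (le_trans hv hw.1)
  have haddm : ∀ v, 1 ≤ v → mF num B v = mF mu B v + mF kap B v := by
    intro v hv
    rw [mF_eq_sum_pc num B V v hBnm hVnm hv, mF_eq_sum_pc mu B V v hBm hVm hv,
        mF_eq_sum_pc kap B V v hBk hVk hv, ← Finset.sum_add_distrib]
    refine Finset.sum_congr rfl fun w hw => ?_
    simp only [Finset.mem_Icc] at hw
    exact hum w (le_trans hv hw.1)
  have part1 : ∀ k, ∑ i ∈ Finset.range k, num i ≤ ∑ i ∈ Finset.range k, nul i := by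
    intro k
    obtain ⟨a, b, hab, hsplit⟩ := split_exists (mF mu B) (mF kap B) V k (mF_anti mu B)
      (mF_anti kap B) (mF_top mu B V hVm) (mF_top kap B V hVk)
    calc ∑ i ∈ Finset.range k, num i
        = ∑ v ∈ Finset.Icc 1 V, min k (mF num B v) := Snm k
      _ ≤ ∑ v ∈ Finset.Icc 1 V, (min a (mF mu B v) + min b (mF kap B v)) := by
          refine Finset.sum_le_sum fun v hv => ?_
          rw [haddm v (Finset.mem_Icc.mp hv).1]
          exact hsplit v hv
      _ = ∑ i ∈ Finset.range a, mu i + ∑ i ∈ Finset.range b, kap i := by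
          rw [Finset.sum_add_distrib, ← Sm a, ← Sk b]
      _ ≤ ∑ i ∈ Finset.range a, lam i + ∑ i ∈ Finset.range b, kap i := by
          have := hdom a; omega
      _ = ∑ v ∈ Finset.Icc 1 V, (min a (mF lam B v) + min b (mF kap B v)) := by
          rw [Finset.sum_add_distrib, ← Sl a, ← Sk b]
      _ ≤ ∑ v ∈ Finset.Icc 1 V, min k (mF nul B v) := by
          refine Finset.sum_le_sum fun v hv => ?_
          rw [haddl v (Finset.mem_Icc.mp hv).1]
          omega
      _ = ∑ i ∈ Finset.range k, nul i := (Snl k).symm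
  refine ⟨part1, ?_⟩
  have htotl : ∑ i ∈ Finset.range B, lam i = N := by
    rw [← hsum1]
    exact (Finset.sum_subset (Finset.range_subset_range.mpr (by omega))
      (fun x hx hnx => hN1 x (by simp only [Finset.mem_range, not_lt] at hnx; omega))).symm
  have htotm : ∑ i ∈ Finset.range B, mu i = N := by
    rw [← hsum2]
    exact (Finset.sum_subset (Finset.range_subset_range.mpr (by omega))
      (fun x hx hnx => hN2 x (by simp only [Finset.mem_range, not_lt] at hnx; omega))).symm
  have hSnulB : ∑ i ∈ Finset.range B, nul i
      = ∑ i ∈ Finset.range B, lam i + ∑ i ∈ Finset.range B, kap i := by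
    rw [Snl B, Sl B, Sk B, ← Finset.sum_add_distrib]
    refine Finset.sum_congr rfl fun v hv => ?_
    have h := haddl v (Finset.mem_Icc.mp hv).1
    have l1 := mF_le lam B v
    have l2 := mF_le kap B v
    have l3 := mF_le nul B v
    omega
  have hSnumB : ∑ i ∈ Finset.range B, num i
      = ∑ i ∈ Finset.range B, mu i + ∑ i ∈ Finset.range B, kap i := by
    rw [Snm B, Sm B, Sk B, ← Finset.sum_add_distrib]
    refine Finset.sum_congr rfl fun v hv => ?_
    have h := haddm v (Finset.mem_Icc.mp hv).1
    have l1 := mF_le mu B v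
    have l2 := mF_le kap B v
    have l3 := mF_le num B v
    omega
  have htot : ∑ i ∈ Finset.range B, nul i = ∑ i ∈ Finset.range B, num i := by
    rw [hSnulB, hSnumB, htotl, htotm]
  have hnv : ∀ (g : ℕ → ℕ), (∀ i, B ≤ i → g i = 0) →
      nVal g = ∑ i ∈ Finset.range B, i * g i := by
    intro g hg
    apply finsum_eq_sum_of_support_subset
    intro i hi
    simp only [Function.mem_support, ne_eq] at hi
    simp only [Finset.coe_range, Set.mem_Iio]
    by_contra hc
    exact hi (by rw [hg i (by omega)]; ring)
  have A1 := abel_sum nul B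
  have A2 := abel_sum num B
  rw [htot] at A1
  have hkey := A1.trans A2.symm
  have hsle : ∑ k ∈ Finset.range B, ∑ i ∈ Finset.range (k + 1), num i
      ≤ ∑ k ∈ Finset.range B, ∑ i ∈ Finset.range (k + 1), nul i :=
    Finset.sum_le_sum fun k _ => part1 (k + 1)
  rw [hnv nul hBnl, hnv num hBnm]
  omega
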